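/- Let a_n be the number of Schröder trees of weight n (so a_0 = 1, a_1 = 1, a_2 = 3, a_3 = 11, …) and let b_n be the number of prime Schröder trees of weight n for n ≥ 1, with b_0 = 1. Then for every n ≥ 1, b_n = Σ_{k=0}^{n−1} a_k · b_{n−1−k}; equivalently, the generating series P = Σ_{n≥0} b_n x^n and S = Σ_{n≥0} a_n x^n satisfy P = 1 + xS/(1 − xS), i.e., P·(1 − xS) = 1. In particular the numbers b_n are the large Schröder numbers. -/

import Mathlib

inductive PTree : Type where
  | node : List PTree → PTree

mutual
  def leavesT : PTree → ℕ
    | .node [] => 1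
    | .node (t :: ts) => leavesT t + leavesL ts
  def leavesL : List PTree → ℕ
    | [] => 0
    | t :: ts => leavesT t + leavesL ts
end

inductive Reduced : PTree → Prop where
  | leaf : Reduced (.node [])
  | node : ∀ ts : List PTree, 2 ≤ ts.length → (∀ t ∈ ts, Reduced t) → Reduced (.node ts)

def IsPrimeTree (t : PTree) : Prop :=
  Reduced t ∧ ∃ ts : List PTree, t = .node ts ∧ ts.getLast? = some (.node [])

noncomputable def aSch (n : ℕ) : ℕ :=
  {t : PTree | Reduced t ∧ leavesT t = n + 1}.ncard

noncomputable def bSch : ℕ → ℕ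
  | 0 => 1
  | n + 1 => {t : PTree | IsPrimeTree t ∧ leavesT t = (n + 1) + 1}.ncard

/- ### basic lemmas on leaves -/

theorem one_le_leavesT : ∀ t : PTree, 1 ≤ leavesT t
  | .node [] => le_refl _
  | .node (t :: ts) => by
      rw [leavesT]
      have := one_le_leavesT t
      omega

theorem leavesL_cons (t : PTree) (ts : List PTree) :
    leavesL (t :: ts) = leavesT t + leavesL ts := by rw [leavesL]

theorem leavesT_node_ne_nil {ts : List PTree} (h : ts ≠ []) :
    leavesT (.node ts) = leavesL ts := by
  cases ts with
  | nil => exact absurd rfl h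
  | cons t ts => rw [leavesT, leavesL]

theorem leavesL_append (l₁ l₂ : List PTree) :
    leavesL (l₁ ++ l₂) = leavesL l₁ + leavesL l₂ := by
  induction l₁ with
  | nil => simp [leavesL]
  | cons t ts ih => simp [leavesL_cons, ih]; omega

theorem length_le_leavesL : ∀ l : List PTree, l.length ≤ leavesL l := by
  intro l
  induction l with
  | nil => simp [leavesL]
  | cons t ts ih => have := one_le_leavesT t; rw [leavesL_cons]; simp; omega

theorem mem_leaves_bound {t : PTree} : ∀ {l : List PTree}, t ∈ l →
    leavesT t + (l.length - 1) ≤ leavesL l := by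
  intro l
  induction l with
  | nil => simp
  | cons a ts ih =>
    intro hm
    rcases List.mem_cons.1 hm with h | h
    · subst h
      have := length_le_leavesL ts
      rw [leavesL_cons]; simp; omega
    · have h1 := ih h
      have h2 := one_le_leavesT a
      have h3 : ts ≠ [] := List.ne_nil_of_mem h
      have h4 : 1 ≤ ts.length := List.length_pos_iff.2 h3
      rw [leavesL_cons]; simp; omega

theorem reduced_children {ts : List PTree} (h : Reduced (.node ts)) :
    ∀ t ∈ ts, Reduced t := by
  cases h with
  | leaf => simp
  | node _ _ h2 => exact h2

theorem reduced_length {ts : List PTree} (h : Reduced (.node ts)) (hne : ts ≠ []) :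
    2 ≤ ts.length := by
  cases h with
  | leaf => exact absurd rfl hne
  | node _ h1 _ => exact h1

/- ### finiteness -/

theorem finite_boundedLists {s : Set PTree} (hs : s.Finite) :
    ∀ m : ℕ, {l : List PTree | l.length ≤ m ∧ ∀ t ∈ l, t ∈ s}.Finite := by
  intro m
  induction m with
  | zero =>
    apply Set.Finite.subset (Set.finite_singleton ([] : List PTree))
    rintro l ⟨hl, -⟩
    simp only [Set.mem_singleton_iff]
    exact List.length_eq_zero_iff.1 (Nat.le_zero.1 hl)
  | succ m ih =>
    apply Set.Finite.subset
      (Set.Finite.union (Set.finite_singleton ([] : List PTree))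
        (Set.Finite.image (fun p : PTree × List PTree => p.1 :: p.2) (hs.prod ih)))
    rintro l ⟨hl, hmem⟩
    cases l with
    | nil => exact Or.inl rfl
    | cons a l =>
      right
      refine ⟨(a, l), ⟨hmem a (by simp), ?_, fun t ht => hmem t (by simp [ht])⟩, rfl⟩
      simpa using hl

theorem finite_U : ∀ m : ℕ, {t : PTree | Reduced t ∧ leavesT t ≤ m}.Finite := by
  intro m
  induction m with
  | zero =>
    convert Set.finite_empty
    ext t
    simp only [Set.mem_setOf_eq, Set.mem_empty_iff_false, iff_false, not_and]
    intro _
    have := one_le_leavesT t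
    omega
  | succ m ih =>
    apply Set.Finite.subset
      (Set.Finite.union (Set.finite_singleton (PTree.node []))
        (Set.Finite.image PTree.node
          (finite_boundedLists ih (m+1))))
    rintro t ⟨hr, hl⟩
    cases t with
    | node ts =>
      cases ts with
      | nil => exact Or.inl rfl
      | cons a l =>
        right
        refine ⟨a :: l, ⟨?_, ?_⟩, rfl⟩
        · have := length_le_leavesL (a :: l)
          rw [leavesT_node_ne_nil (by simp)] at hl
          omega
        · intro t ht
          refine ⟨reduced_children hr t ht, ?_⟩
          have h2 := reduced_length hr (by simp)
          have h3 := mem_leaves_bound ht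
          rw [leavesT_node_ne_nil (by simp)] at hl
          omega

/- ### the sets -/

def ASet (n : ℕ) : Set PTree := {t | Reduced t ∧ leavesT t = n}
def LSet (n : ℕ) : Set (List PTree) := {l | (∀ t ∈ l, Reduced t) ∧ leavesL l = n}

theorem finite_ASet (n : ℕ) : (ASet n).Finite :=
  (finite_U n).subset fun t ⟨h1, h2⟩ => ⟨h1, h2.le⟩

theorem finite_LSet (n : ℕ) : (LSet n).Finite := by
  apply (finite_boundedLists (finite_U n) n).subset
  rintro l ⟨h1, h2⟩
  refine ⟨h2 ▸ length_le_leavesL l, fun t ht => ⟨h1 t ht, ?_⟩⟩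
  have := mem_leaves_bound ht
  omega

theorem aSch_eq (n : ℕ) : aSch n = (ASet (n + 1)).ncard := rfl

theorem LSet_zero : LSet 0 = {[]} := by
  ext l
  constructor
  · rintro ⟨-, h2⟩
    cases l with
    | nil => rfl
    | cons a l =>
      rw [leavesL_cons] at h2
      have := one_le_leavesT a
      omega
  · rintro rfl
    exact ⟨by simp, rfl⟩

theorem bSch_eq : ∀ m : ℕ, bSch m = (LSet m).ncard := by
  intro m
  cases m with
  | zero => rw [LSet_zero, bSch]; simp
  | succ m =>
    rw [bSch]
    have himg : {t : PTree | IsPrimeTree t ∧ leavesT t = (m + 1) + 1} =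
        (fun l => PTree.node (l ++ [PTree.node []])) '' LSet (m + 1) := by
      ext t
      constructor
      · rintro ⟨⟨hr, ts, rfl, hlast⟩, hlv⟩
        have hne : ts ≠ [] := by rintro rfl; simp at hlast
        have hts : ts = ts.dropLast ++ [ts.getLast hne] := (List.dropLast_append_getLast hne).symm
        rw [List.getLast?_eq_getLast hne] at hlast
        have hlast' : ts.getLast hne = PTree.node [] := by injection hlast
        rw [hlast'] at hts
        refine ⟨ts.dropLast, ⟨fun u hu => reduced_children hr u ?_, ?_⟩, congrArg PTree.node hts.symm⟩
        · rw [hts]; exact List.mem_append_left _ hu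
        · rw [leavesT_node_ne_nil hne] at hlv
          conv at hlv => rw [hts]
          rw [leavesL_append] at hlv
          simp [leavesL_cons, leavesL, leavesT] at hlv
          omega
      · rintro ⟨l, ⟨h1, h2⟩, rfl⟩
        have hne : l ≠ [] := by
          rintro rfl; simp [leavesL] at h2
        constructor
        · constructor
          · refine Reduced.node _ ?_ ?_
            · have : 1 ≤ l.length := List.length_pos_iff.2 hne
              simp; omega
            · intro t ht
              rcases List.mem_append.1 ht with h | h
              · exact h1 t h
              · simp at h; subst h; exact Reduced.leaf
          · exact ⟨l ++ [PTree.node []], rfl, by simp⟩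
        · rw [leavesT_node_ne_nil (by simp), leavesL_append, h2]
          simp [leavesL, leavesT]
    rw [himg]
    apply Set.ncard_image_of_injective
    intro l₁ l₂ h
    have h' : l₁ ++ [PTree.node []] = l₂ ++ [PTree.node []] := by injection h
    exact List.append_cancel_right h'

/- ### ncard helpers -/

theorem ncard_prod {α β : Type*} (s : Set α) (t : Set β) :
    (s ×ˢ t).ncard = s.ncard * t.ncard := by
  rw [← Nat.card_coe_set_eq, ← Nat.card_coe_set_eq, ← Nat.card_coe_set_eq,
    ← Nat.card_prod]
  exact Nat.card_congr (Equiv.Set.prod s t)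

theorem ncard_biUnion_range {α : Type*} (f : ℕ → Set α) (n : ℕ)
    (hf : ∀ k, (f k).Finite)
    (hd : ∀ i j, i ≠ j → Disjoint (f i) (f j)) :
    (⋃ k ∈ Finset.range n, f k).ncard = ∑ k ∈ Finset.range n, (f k).ncard := by
  induction n with
  | zero => simp
  | succ n ih =>
    rw [Finset.sum_range_succ, ← ih]
    have hu : (⋃ k ∈ Finset.range (n+1), f k) = (⋃ k ∈ Finset.range n, f k) ∪ f n := by
      ext x; simp [Finset.mem_range]
      constructor
      · rintro ⟨i, hi, hx⟩
        rcases Nat.lt_or_eq_of_le hi with h | rfl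
        · exact Or.inl ⟨i, h, hx⟩
        · exact Or.inr hx
      · rintro (⟨i, hi, hx⟩ | hx)
        · exact ⟨i, by omega, hx⟩
        · exact ⟨n, by omega, hx⟩
    rw [hu]
    apply Set.ncard_union_eq
    · apply Set.disjoint_left.2
      rintro x hx hx'
      simp at hx
      rcases hx with ⟨i, hi, hx⟩
      exact Set.disjoint_left.1 (hd i n (by omega)) hx hx'
    · exact Set.Finite.biUnion (Finset.range n).finite_toSet (fun i _ => hf i)
    · exact hf n

/- ### the recurrence -/

theorem LSet_succ_ncard (n : ℕ) :
    (LSet (n + 1)).ncard = ∑ k ∈ Finset.range (n + 1), aSch k * (LSet (n - k)).ncard := by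
  have hdecomp : LSet (n + 1) =
      ⋃ k ∈ Finset.range (n + 1),
        (fun p : PTree × List PTree => p.1 :: p.2) '' (ASet (k + 1) ×ˢ LSet (n - k)) := by
    ext l
    simp only [Set.mem_iUnion, Finset.mem_range, Set.mem_image, Set.mem_prod]
    constructor
    · rintro ⟨h1, h2⟩
      cases l with
      | nil => simp [leavesL] at h2
      | cons a l =>
        rw [leavesL_cons] at h2
        have ha := one_le_leavesT a
        refine ⟨leavesT a - 1, by omega, (a, l),
          ⟨⟨h1 a (by simp), show leavesT a = leavesT a - 1 + 1 by omega⟩,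
            fun t ht => h1 t (by simp [ht]),
            show leavesL l = n - (leavesT a - 1) by omega⟩, rfl⟩
    · rintro ⟨k, hk, ⟨a, l'⟩, ⟨⟨ha1, ha2⟩, hl1, hl2⟩, rfl⟩
      refine ⟨?_, ?_⟩
      · intro t ht
        rcases List.mem_cons.1 ht with rfl | h
        · exact ha1
        · exact hl1 t h
      · rw [leavesL_cons, ha2, hl2]; omega
  rw [hdecomp, ncard_biUnion_range]
  · apply Finset.sum_congr rfl
    intro k _
    rw [Set.ncard_image_of_injective _ (fun p q h => by
      cases p; cases q; simpa using h), ncard_prod, aSch_eq]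
  · intro k
    exact Set.Finite.image _ ((finite_ASet (k+1)).prod (finite_LSet (n-k)))
  · intro i j hij
    apply Set.disjoint_left.2
    rintro l ⟨⟨a, l'⟩, ⟨⟨-, ha⟩, -⟩, rfl⟩ ⟨⟨b, l''⟩, ⟨⟨-, hb⟩, -⟩, heq⟩
    simp only at ha hb
    have hba : b = a := by injection heq
    subst hba
    exact hij (by omega)

/-- `b_n = Σ_{k=0}^{n−1} a_k · b_{n−1−k}` for `n ≥ 1`; equivalently,
the generating series `P = Σ b_n x^n` and `S = Σ a_n x^n` satisfy
`P·(1 − xS) = 1`, i.e. `P = 1 + xS/(1 − xS)`. -/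
theorem stmt8 :
    (∀ n : ℕ, 1 ≤ n → bSch n = ∑ k ∈ Finset.range n, aSch k * bSch (n - 1 - k)) ∧
    (PowerSeries.mk (fun n => (bSch n : ℚ))) *
      (1 - PowerSeries.X * PowerSeries.mk (fun n => (aSch n : ℚ))) = 1 := by
  have key : ∀ n : ℕ, 1 ≤ n → bSch n = ∑ k ∈ Finset.range n, aSch k * bSch (n - 1 - k) := by
    rintro (_ | m) h
    · omega
    · rw [bSch_eq, LSet_succ_ncard]
      apply Finset.sum_congr rfl
      intro k _
      rw [← bSch_eq]
      congr 1
  refine ⟨key, ?_⟩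
  rw [mul_sub, mul_one, sub_eq_iff_eq_add]
  ext n
  cases n with
  | zero =>
    simp [bSch]
  | succ n =>
    rw [map_add, PowerSeries.coeff_mk]
    have h1 : (PowerSeries.coeff (R := ℚ) (n+1)) 1 = 0 := by
      simp [PowerSeries.coeff_one]
    rw [h1, zero_add]
    have h2 : PowerSeries.mk (fun n => (bSch n : ℚ)) *
        (PowerSeries.X * PowerSeries.mk (fun n => (aSch n : ℚ))) =
        PowerSeries.X * (PowerSeries.mk (fun n => (aSch n : ℚ)) *
          PowerSeries.mk (fun n => (bSch n : ℚ))) := by ring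
    rw [h2, PowerSeries.coeff_succ_X_mul, PowerSeries.coeff_mul]
    rw [Finset.Nat.sum_antidiagonal_eq_sum_range_succ_mk]
    simp only [PowerSeries.coeff_mk]
    rw [key (n+1) (by omega)]
    push_cast
    apply Finset.sum_congr rfl
    intro k _
    congr 2
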